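/- Let A be an m×n real matrix partitioned as A = [[A₁₁, A₁₂],[A₂₁, A₂₂]] with A₁₁ a nonsingular k×k block, k < min(m,n), and let ρ ≥ 1, β > 0. If ‖A₁₁⁻¹A₁₂‖_C ≤ ρ, ‖A₂₁A₁₁⁻¹‖_C ≤ ρ, ‖A/A₁₁‖_C ≤ ρβ, and ‖A₁₁⁻¹‖_C ≤ ρβ⁻¹, then A₁₁ has local (2ρ²)-maximum volume in A. -/

import Mathlib

open Matrix

section Aux

lemma abs_det_submatrix_equiv' {n m : Type*} [Fintype n] [Fintype m] [DecidableEq n]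
    [DecidableEq m] (e f : n ≃ m) (M : Matrix m m ℝ) : |(M.submatrix e f).det| = |M.det| := by
  have h : M.submatrix e f = (M.submatrix e e).submatrix id ⇑(f.trans e.symm) := by
    ext i j; simp
  rw [h, Matrix.det_permute', Matrix.det_submatrix_equiv_self, abs_mul]
  rcases Int.units_eq_one_or (Equiv.Perm.sign (f.trans e.symm)) with hs | hs <;>
    simp [hs]

/-- Extend an injection `Fin k → Fin k ⊕ Unit` missing `α` to an equivalence. -/
noncomputable def extEquiv' {k : ℕ} (r : Fin k → Fin k ⊕ Unit) (hr : Function.Injective r)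
    (α : Fin k ⊕ Unit) (hα : ∀ j, r j ≠ α) : (Fin k ⊕ Unit) ≃ (Fin k ⊕ Unit) :=
  Equiv.ofBijective (Sum.elim r (fun _ => α)) <| by
    refine (Finite.injective_iff_bijective).mp ?_
    rintro (i | u) (i' | u') h
    · exact congrArg Sum.inl (hr h)
    · exact absurd h (hα i)
    · exact absurd h.symm (hα i')
    · cases u; cases u'; rfl

lemma extEquiv'_inl {k : ℕ} (r : Fin k → Fin k ⊕ Unit) (hr) (α) (hα) (i : Fin k) :
    extEquiv' r hr α hα (Sum.inl i) = r i := rfl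

lemma extEquiv'_inr {k : ℕ} (r : Fin k → Fin k ⊕ Unit) (hr) (α) (hα) (u : Unit) :
    extEquiv' r hr α hα (Sum.inr u) = α := rfl

lemma exists_missing' {k : ℕ} (r : Fin k → Fin k ⊕ Unit) :
    ∃ α, ∀ j, r j ≠ α := by
  by_contra h
  push_neg at h
  have hs : Function.Surjective r := fun b => h b
  have := Fintype.card_le_of_surjective r hs
  simp at this

lemma abs_det_submatrix_eq_abs_adjugate' {k : ℕ}
    (M : Matrix (Fin k ⊕ Unit) (Fin k ⊕ Unit) ℝ) (r c : Fin k → Fin k ⊕ Unit)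
    (hr : Function.Injective r) (hc : Function.Injective c) :
    ∃ α γ, |(M.submatrix r c).det| = |adjugate M γ α| := by
  obtain ⟨α, hα⟩ := exists_missing' r
  obtain ⟨γ, hγ⟩ := exists_missing' c
  refine ⟨α, γ, ?_⟩
  set R := extEquiv' r hr α hα
  set C := extEquiv' c hc γ hγ
  rw [Matrix.adjugate_apply]
  rw [← abs_det_submatrix_equiv' R C]
  have key : (M.updateRow α (Pi.single γ 1)).submatrix R C =
      Matrix.fromBlocks (M.submatrix r c) (Matrix.of fun i (_ : Unit) => M (r i) γ) 0 1 := by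
    ext i j
    rcases i with i | u <;> rcases j with j | v
    · simp [Matrix.submatrix_apply, extEquiv'_inl, Matrix.updateRow_apply, hα i, R, C]
    · simp [Matrix.submatrix_apply, extEquiv'_inl, extEquiv'_inr, Matrix.updateRow_apply,
        hα i, R, C]
    · simp [Matrix.submatrix_apply, extEquiv'_inl, extEquiv'_inr, Matrix.updateRow_apply,
        Pi.single_apply, hγ j, R, C]
    · simp [Matrix.submatrix_apply, extEquiv'_inr, Matrix.updateRow_apply, Pi.single_apply, R, C]
  rw [key, Matrix.det_fromBlocks_zero₂₁]
  simp

lemma adjugate_border' {k : ℕ} (A : Matrix (Fin k) (Fin k) ℝ) (hA : IsUnit A.det)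
    (b : Matrix (Fin k) Unit ℝ) (c : Matrix Unit (Fin k) ℝ) (d : Matrix Unit Unit ℝ) :
    adjugate (Matrix.fromBlocks A b c d) =
      A.det • Matrix.fromBlocks
        ((d () () - (c * A⁻¹ * b) () ()) • A⁻¹ + A⁻¹ * b * c * A⁻¹)
        (-(A⁻¹ * b)) (-(c * A⁻¹)) 1 := by
  haveI := A.invertibleOfIsUnitDet hA
  set e : ℝ := (c * A⁻¹ * b) () () with he
  have hcb : c * A⁻¹ * b = e • (1 : Matrix Unit Unit ℝ) := by
    ext i j; cases i; cases j; simp [he]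
  have hdUnit : ∀ s : ℝ, (s • (1 : Matrix Unit Unit ℝ)).det = s := by
    intro s; rw [Matrix.det_unique]; simp
  set F : ℝ → Matrix (Fin k ⊕ Unit) (Fin k ⊕ Unit) ℝ :=
    fun t => Matrix.fromBlocks A b c (t • (1 : Matrix Unit Unit ℝ)) with hF
  set G : ℝ → Matrix (Fin k ⊕ Unit) (Fin k ⊕ Unit) ℝ :=
    fun t => A.det • Matrix.fromBlocks ((t - e) • A⁻¹ + A⁻¹ * b * c * A⁻¹)
      (-(A⁻¹ * b)) (-(c * A⁻¹)) 1 with hG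
  have hmain : ∀ t : ℝ, t ≠ e → adjugate (F t) = G t := by
    intro t ht
    have hAA : A * A⁻¹ = 1 := mul_nonsing_inv A hA
    have h11 : A * ((t - e) • A⁻¹ + A⁻¹ * b * c * A⁻¹) + b * (-(c * A⁻¹)) =
        (t - e) • (1 : Matrix (Fin k) (Fin k) ℝ) := by
      rw [Matrix.mul_add, Matrix.mul_smul, hAA, Matrix.mul_neg,
        show A * (A⁻¹ * b * c * A⁻¹) = A * A⁻¹ * b * (c * A⁻¹) by
          simp only [Matrix.mul_assoc], hAA, Matrix.one_mul]
      abel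
    have h12 : A * (-(A⁻¹ * b)) + b * (1 : Matrix Unit Unit ℝ) = 0 := by
      rw [Matrix.mul_neg, ← Matrix.mul_assoc, hAA, Matrix.one_mul, Matrix.mul_one,
        neg_add_cancel]
    have h21 : c * ((t - e) • A⁻¹ + A⁻¹ * b * c * A⁻¹) +
        t • (1 : Matrix Unit Unit ℝ) * (-(c * A⁻¹)) = 0 := by
      rw [Matrix.mul_add, Matrix.mul_smul,
        show c * (A⁻¹ * b * c * A⁻¹) = c * A⁻¹ * b * (c * A⁻¹) by
          simp only [Matrix.mul_assoc], hcb]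
      simp only [Matrix.smul_mul, Matrix.one_mul, Matrix.mul_neg, smul_neg]
      module
    have h22 : c * (-(A⁻¹ * b)) + t • (1 : Matrix Unit Unit ℝ) * (1 : Matrix Unit Unit ℝ) =
        (t - e) • (1 : Matrix Unit Unit ℝ) := by
      rw [Matrix.mul_neg, ← Matrix.mul_assoc, hcb]
      simp only [Matrix.smul_mul, Matrix.one_mul, Matrix.mul_one]
      module
    have hdet : (F t).det = A.det * (t - e) := by
      rw [hF]
      simp only
      rw [Matrix.det_fromBlocks₁₁, invOf_eq_nonsing_inv, hcb, ← sub_smul, hdUnit]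
    have hdu : IsUnit (F t).det := by
      rw [hdet]
      exact hA.mul (isUnit_iff_ne_zero.mpr (sub_ne_zero.mpr ht))
    haveI := (F t).invertibleOfIsUnitDet hdu
    have hMG : F t * G t = (F t).det • 1 := by
      rw [hdet, hF, hG]
      simp only
      rw [Matrix.mul_smul, Matrix.fromBlocks_multiply, h11, h12, h21, h22,
        show Matrix.fromBlocks ((t - e) • (1 : Matrix (Fin k) (Fin k) ℝ)) 0 0
            ((t - e) • (1 : Matrix Unit Unit ℝ)) =
          (t - e) • Matrix.fromBlocks 1 0 0 1 by rw [Matrix.fromBlocks_smul]; simp,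
        Matrix.fromBlocks_one, smul_smul]
    calc adjugate (F t) = ⅟(F t) * (F t * adjugate (F t)) := by
          rw [← Matrix.mul_assoc, invOf_mul_self, Matrix.one_mul]
      _ = ⅟(F t) * (F t * G t) := by rw [Matrix.mul_adjugate, ← hMG]
      _ = G t := by rw [← Matrix.mul_assoc, invOf_mul_self, Matrix.one_mul]
  have hcont1 : Continuous fun t => adjugate (F t) := by
    have : Continuous F := by
      rw [hF]
      exact Continuous.matrix_fromBlocks continuous_const continuous_const continuous_const
        (continuous_id.smul continuous_const)
    exact this.matrix_adjugate
  have hcont2 : Continuous G := by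
    rw [hG]
    exact (continuous_const : Continuous fun _ : ℝ => A.det).smul (Continuous.matrix_fromBlocks
      (((continuous_id.sub (continuous_const : Continuous fun _ : ℝ => e)).smul
        (continuous_const : Continuous fun _ : ℝ => A⁻¹)).add continuous_const)
      continuous_const continuous_const continuous_const)
  have heq : (fun t => adjugate (F t)) = G :=
    hcont1.ext_on (dense_compl_singleton e) hcont2 (fun t ht => hmain t ht)
  have hd : d = (d () ()) • (1 : Matrix Unit Unit ℝ) := by
    ext i j; cases i; cases j; simp
  calc adjugate (Matrix.fromBlocks A b c d) = adjugate (F (d () ())) := by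
        rw [hF]; simp only; rw [← hd]
    _ = G (d () ()) := congrFun heq _
    _ = _ := by rw [hG]

end Aux

/-- The maximum absolute entry norm `‖·‖_C` of a matrix. -/
noncomputable def cnorm {m n : Type*} [Fintype m] [Fintype n]
    (M : Matrix m n ℝ) : ℝ := ⨆ i, ⨆ j, |M i j|

lemma abs_entry_le_cnorm' {m n : Type*} [Fintype m] [Fintype n] (M : Matrix m n ℝ)
    (i : m) (j : n) : |M i j| ≤ cnorm M := by
  have h1 : |M i j| ≤ ⨆ j, |M i j| :=
    le_ciSup (f := fun j => |M i j|) (Set.Finite.bddAbove (Set.finite_range _)) j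
  exact h1.trans (le_ciSup (f := fun i => ⨆ j, |M i j|)
    (Set.Finite.bddAbove (Set.finite_range _)) i)

/-- Let `A = [[A₁₁, A₁₂], [A₂₁, A₂₂]]` be an `m × n` real matrix with `A₁₁` a nonsingular
`k × k` block, `k < min(m,n)`, and let `ρ ≥ 1`, `β > 0`.  If `‖A₁₁⁻¹ A₁₂‖_C ≤ ρ`,
`‖A₂₁ A₁₁⁻¹‖_C ≤ ρ`, `‖A/A₁₁‖_C ≤ ρ β` and `‖A₁₁⁻¹‖_C ≤ ρ β⁻¹`, then `A₁₁` has local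
`(2ρ²)`-maximum volume in `A`; i.e. for each `(k+1) × (k+1)` submatrix
`Ahat p q = [[A₁₁, A₁₂ eq], [A₂₁ row p, A₂₂ p q]]` of `A` containing `A₁₁`, every `k × k`
submatrix of `Ahat p q` has absolute determinant at most `2ρ² * |det A₁₁|`. -/
theorem local_maxvol_of_bounds {k m₂ n₂ : ℕ} (hm : 0 < m₂) (hn : 0 < n₂)
    (A₁₁ : Matrix (Fin k) (Fin k) ℝ) (A₁₂ : Matrix (Fin k) (Fin n₂) ℝ)
    (A₂₁ : Matrix (Fin m₂) (Fin k) ℝ) (A₂₂ : Matrix (Fin m₂) (Fin n₂) ℝ)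
    (hA : IsUnit A₁₁.det) (ρ β : ℝ) (hρ : 1 ≤ ρ) (hβ : 0 < β)
    (h₁ : cnorm (A₁₁⁻¹ * A₁₂) ≤ ρ)
    (h₂ : cnorm (A₂₁ * A₁₁⁻¹) ≤ ρ)
    (h₃ : cnorm (A₂₂ - A₂₁ * A₁₁⁻¹ * A₁₂) ≤ ρ * β)
    (h₄ : cnorm A₁₁⁻¹ ≤ ρ * β⁻¹) :
    ∀ (p : Fin m₂) (q : Fin n₂) (r c : Fin k → Fin k ⊕ Unit),
      Function.Injective r → Function.Injective c →
      |((Matrix.fromBlocks A₁₁ (Matrix.of fun i _ => A₁₂ i q)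
          (Matrix.of fun _ j => A₂₁ p j) (Matrix.of fun _ _ => A₂₂ p q)).submatrix r c).det|
        ≤ (2 * ρ ^ 2) * |A₁₁.det| := by
  intro p q r c hr hc
  set B : Matrix (Fin k) Unit ℝ := Matrix.of fun i _ => A₁₂ i q with hB
  set C : Matrix Unit (Fin k) ℝ := Matrix.of fun _ j => A₂₁ p j with hC
  set D : Matrix Unit Unit ℝ := Matrix.of fun _ _ => A₂₂ p q with hD
  obtain ⟨α, γ, hval⟩ := abs_det_submatrix_eq_abs_adjugate'
    (Matrix.fromBlocks A₁₁ B C D) r c hr hc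
  rw [hval, adjugate_border' A₁₁ hA B C D, Matrix.smul_apply, smul_eq_mul, abs_mul]
  -- entry-level facts
  have hBe : ∀ (j₀ : Fin k) (u : Unit), (A₁₁⁻¹ * B) j₀ u = (A₁₁⁻¹ * A₁₂) j₀ q := by
    intro j₀ u
    simp [Matrix.mul_apply, hB]
  have hCe : ∀ (i₀ : Fin k) (u : Unit), (C * A₁₁⁻¹) u i₀ = (A₂₁ * A₁₁⁻¹) p i₀ := by
    intro i₀ u
    simp [Matrix.mul_apply, hC]
  have hSe : D () () - (C * A₁₁⁻¹ * B) () () = (A₂₂ - A₂₁ * A₁₁⁻¹ * A₁₂) p q := by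
    have : (C * A₁₁⁻¹ * B) () () = (A₂₁ * A₁₁⁻¹ * A₁₂) p q := by
      rw [show C * A₁₁⁻¹ * B = (C * A₁₁⁻¹) * B from rfl, Matrix.mul_apply]
      rw [show (A₂₁ * A₁₁⁻¹ * A₁₂) p q = ((A₂₁ * A₁₁⁻¹) * A₁₂) p q from rfl, Matrix.mul_apply]
      exact Finset.sum_congr rfl fun j _ => by rw [hCe j ()]; simp [hB]
    rw [this]
    simp [hD]
  have hPe : ∀ (j₀ i₀ : Fin k), (A₁₁⁻¹ * B * C * A₁₁⁻¹) j₀ i₀ =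
      (A₁₁⁻¹ * A₁₂) j₀ q * (A₂₁ * A₁₁⁻¹) p i₀ := by
    intro j₀ i₀
    rw [show A₁₁⁻¹ * B * C * A₁₁⁻¹ = (A₁₁⁻¹ * B) * (C * A₁₁⁻¹) by
      simp only [Matrix.mul_assoc], Matrix.mul_apply]
    simp [hBe, hCe]
  -- numeric bounds
  have hββ : β * β⁻¹ = 1 := mul_inv_cancel₀ hβ.ne'
  have key : |(Matrix.fromBlocks
        ((D () () - (C * A₁₁⁻¹ * B) () ()) • A₁₁⁻¹ + A₁₁⁻¹ * B * C * A₁₁⁻¹)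
        (-(A₁₁⁻¹ * B)) (-(C * A₁₁⁻¹)) 1) γ α| ≤ 2 * ρ ^ 2 := by
    rcases γ with j₀ | u <;> rcases α with i₀ | u'
    · rw [Matrix.fromBlocks_apply₁₁, Matrix.add_apply, Matrix.smul_apply, smul_eq_mul,
        hSe, hPe]
      have e1 : |(A₂₂ - A₂₁ * A₁₁⁻¹ * A₁₂) p q| ≤ ρ * β := (abs_entry_le_cnorm' _ p q).trans h₃
      have e2 : |A₁₁⁻¹ j₀ i₀| ≤ ρ * β⁻¹ := (abs_entry_le_cnorm' _ _ _).trans h₄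
      have e3 : |(A₁₁⁻¹ * A₁₂) j₀ q| ≤ ρ := (abs_entry_le_cnorm' _ _ _).trans h₁
      have e4 : |(A₂₁ * A₁₁⁻¹) p i₀| ≤ ρ := (abs_entry_le_cnorm' _ _ _).trans h₂
      have t1 : |(A₂₂ - A₂₁ * A₁₁⁻¹ * A₁₂) p q * A₁₁⁻¹ j₀ i₀| ≤ ρ ^ 2 := by
        rw [abs_mul]
        calc |(A₂₂ - A₂₁ * A₁₁⁻¹ * A₁₂) p q| * |A₁₁⁻¹ j₀ i₀| ≤ (ρ * β) * (ρ * β⁻¹) :=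
              mul_le_mul e1 e2 (abs_nonneg _) (by positivity)
          _ = ρ ^ 2 * (β * β⁻¹) := by ring
          _ = ρ ^ 2 := by rw [hββ, mul_one]
      have t2 : |(A₁₁⁻¹ * A₁₂) j₀ q * (A₂₁ * A₁₁⁻¹) p i₀| ≤ ρ ^ 2 := by
        rw [abs_mul]
        calc |(A₁₁⁻¹ * A₁₂) j₀ q| * |(A₂₁ * A₁₁⁻¹) p i₀| ≤ ρ * ρ :=
              mul_le_mul e3 e4 (abs_nonneg _) (by linarith)
          _ = ρ ^ 2 := by ring
      calc |(A₂₂ - A₂₁ * A₁₁⁻¹ * A₁₂) p q * A₁₁⁻¹ j₀ i₀ +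
              (A₁₁⁻¹ * A₁₂) j₀ q * (A₂₁ * A₁₁⁻¹) p i₀|
            ≤ |(A₂₂ - A₂₁ * A₁₁⁻¹ * A₁₂) p q * A₁₁⁻¹ j₀ i₀| +
              |(A₁₁⁻¹ * A₁₂) j₀ q * (A₂₁ * A₁₁⁻¹) p i₀| := abs_add_le _ _
        _ ≤ ρ ^ 2 + ρ ^ 2 := add_le_add t1 t2
        _ = 2 * ρ ^ 2 := by ring
    · rw [Matrix.fromBlocks_apply₁₂, Matrix.neg_apply, abs_neg, hBe]
      have e3 : |(A₁₁⁻¹ * A₁₂) j₀ q| ≤ ρ := (abs_entry_le_cnorm' _ _ _).trans h₁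
      nlinarith [e3]
    · rw [Matrix.fromBlocks_apply₂₁, Matrix.neg_apply, abs_neg, hCe]
      have e4 : |(A₂₁ * A₁₁⁻¹) p i₀| ≤ ρ := (abs_entry_le_cnorm' _ _ _).trans h₂
      nlinarith [e4]
    · rw [Matrix.fromBlocks_apply₂₂]
      cases u; cases u'
      rw [Matrix.one_apply_eq, abs_one]
      nlinarith
  calc |A₁₁.det| * |(Matrix.fromBlocks
        ((D () () - (C * A₁₁⁻¹ * B) () ()) • A₁₁⁻¹ + A₁₁⁻¹ * B * C * A₁₁⁻¹)
        (-(A₁₁⁻¹ * B)) (-(C * A₁₁⁻¹)) 1) γ α|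
      = |(Matrix.fromBlocks
        ((D () () - (C * A₁₁⁻¹ * B) () ()) • A₁₁⁻¹ + A₁₁⁻¹ * B * C * A₁₁⁻¹)
        (-(A₁₁⁻¹ * B)) (-(C * A₁₁⁻¹)) 1) γ α| * |A₁₁.det| := mul_comm _ _
    _ ≤ (2 * ρ ^ 2) * |A₁₁.det| := mul_le_mul_of_nonneg_right key (abs_nonneg _)
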